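/- Let L > 0 and ℓ₂ ∈ (0, L). Suppose F : [0, L] → ℝ is continuous, is twice differentiable on (0, ℓ₂) and on (ℓ₂, L) with F''(x) = 1/L on both intervals, has one-sided derivatives F'(0⁺) = 0 and F'(L⁻) = 0, and satisfies ∫₀ᴸ F(x) dx = 0. Then F(x) = (x² + ℓ₂²)/(2L) + L/3 − max(x, ℓ₂) for all x ∈ [0, L]. -/

import Mathlib

open Set Filter Topology

/-- A function with zero derivative on the open interval and continuous on the
closed interval is constant on the closed interval. -/
lemma constOn_of_derivAt_zero {a b : ℝ} (hab : a < b) {f : ℝ → ℝ}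
    (hc : ContinuousOn f (Set.Icc a b))
    (hd : ∀ x ∈ Set.Ioo a b, HasDerivAt f 0 x) :
    ∀ x ∈ Set.Icc a b, f x = f a := by
  have key : ∀ x ∈ Set.Ioo a b, ∀ y ∈ Set.Ioo a b, x ≤ y → f y = f x := by
    intro x hx y hy hxy
    have hsub : Set.Icc x y ⊆ Set.Ioo a b := fun t ht =>
      ⟨lt_of_lt_of_le hx.1 ht.1, lt_of_le_of_lt ht.2 hy.2⟩
    exact constant_of_has_deriv_right_zero
      (fun t ht => (hd t (hsub ht)).continuousAt.continuousWithinAt)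
      (fun t ht => (hd t (hsub (Set.Ico_subset_Icc_self ht))).hasDerivWithinAt)
      y (Set.right_mem_Icc.2 hxy)
  have hmem : (a + b) / 2 ∈ Set.Ioo a b := ⟨by linarith, by linarith⟩
  have hIoo : ∀ x ∈ Set.Ioo a b, f x = f ((a + b) / 2) := by
    intro x hx
    rcases le_total x ((a + b) / 2) with h | h
    · exact (key x hx _ hmem h).symm
    · exact key _ hmem x hx h
  have hbound : ∀ z ∈ Set.Icc a b, f z = f ((a + b) / 2) := by
    intro z hz
    by_cases hzIoo : z ∈ Set.Ioo a b
    · exact hIoo z hzIoo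
    · have hzcl : z ∈ closure (Set.Ioo a b) := by
        rw [closure_Ioo hab.ne]; exact hz
      have hne : (𝓝[Set.Ioo a b] z).NeBot := mem_closure_iff_nhdsWithin_neBot.1 hzcl
      have h1 : Filter.Tendsto f (𝓝[Set.Ioo a b] z) (𝓝 (f z)) :=
        (hc z hz).mono Set.Ioo_subset_Icc_self
      have h2 : Filter.Tendsto f (𝓝[Set.Ioo a b] z) (𝓝 (f ((a + b) / 2))) := by
        refine Filter.Tendsto.congr' ?_ tendsto_const_nhds
        exact Filter.eventuallyEq_of_mem self_mem_nhdsWithin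
          fun x hx => (hIoo x hx).symm
      exact tendsto_nhds_unique h1 h2
  intro x hx
  rw [hbound x hx, hbound a ⟨le_refl a, hab.le⟩]

/-- Derivative of the model quadratic. -/
lemma quad_deriv (L c a x : ℝ) (hL : L ≠ 0) :
    HasDerivAt (fun x : ℝ => (x ^ 2 - a ^ 2) / (2 * L) + c * (x - a))
      (x / L + c) x := by
  have h1 : HasDerivAt (fun x : ℝ => x ^ 2 - a ^ 2) (2 * x) x := by
    simpa using (hasDerivAt_pow 2 x).sub_const (a ^ 2)
  have h2 : HasDerivAt (fun x : ℝ => c * (x - a)) (c * 1) x :=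
    ((hasDerivAt_id x).sub_const a).const_mul c
  have : HasDerivAt (fun x : ℝ => (x ^ 2 - a ^ 2) / (2 * L) + c * (x - a))
      (2 * x / (2 * L) + c * 1) x := (h1.div_const (2 * L)).add h2
  convert this using 1
  field_simp

/-- On a closed interval, a function with second derivative `1/L` on the open
interval has the explicit quadratic form with some slope constant `c`. -/
lemma piece_form (L a b : ℝ) (hL : L ≠ 0) (hab : a < b) (f f' : ℝ → ℝ)
    (hc : ContinuousOn f (Set.Icc a b))
    (hd : ∀ x ∈ Set.Ioo a b, HasDerivAt f (f' x) x)
    (hd2 : ∀ x ∈ Set.Ioo a b, HasDerivAt f' (1 / L) x) :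
    ∃ c, ∀ x ∈ Set.Icc a b,
      f x = f a + ((x ^ 2 - a ^ 2) / (2 * L) + c * (x - a)) := by
  set g : ℝ → ℝ := fun t => f' t - t / L with hg
  have hgd : ∀ t ∈ Set.Ioo a b, HasDerivAt g 0 t := by
    intro t ht
    have := (hd2 t ht).sub ((hasDerivAt_id t).div_const L)
    rw [sub_self] at this
    exact this
  -- g is constant on Ioo a b
  have hgc : ∀ x ∈ Set.Ioo a b, ∀ y ∈ Set.Ioo a b, x ≤ y → g y = g x := by
    intro x hx y hy hxy
    rcases eq_or_lt_of_le hxy with rfl | hlt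
    · rfl
    have hsub : Set.Icc x y ⊆ Set.Ioo a b := fun t ht =>
      ⟨lt_of_lt_of_le hx.1 ht.1, lt_of_le_of_lt ht.2 hy.2⟩
    exact constOn_of_derivAt_zero hlt
      (fun t ht => (hgd t (hsub ht)).continuousAt.continuousWithinAt)
      (fun t ht => hgd t (hsub (Set.Ioo_subset_Icc_self ht)))
      y (Set.right_mem_Icc.2 hxy)
  have hmem : (a + b) / 2 ∈ Set.Ioo a b := ⟨by linarith, by linarith⟩
  set c : ℝ := g ((a + b) / 2) with hcdef
  have hf' : ∀ x ∈ Set.Ioo a b, f' x = x / L + c := by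
    intro x hx
    have hgx : g x = c := by
      rcases le_total x ((a + b) / 2) with h | h
      · exact (hgc x hx _ hmem h).symm
      · exact hgc _ hmem x hx h
    simp only [hg] at hgx
    linarith [hgx]
  -- now integrate once
  set u : ℝ → ℝ := fun x => f x - ((x ^ 2 - a ^ 2) / (2 * L) + c * (x - a)) with hu
  have hucont : ContinuousOn u (Set.Icc a b) := by
    apply hc.sub
    apply Continuous.continuousOn
    fun_prop
  have hud : ∀ x ∈ Set.Ioo a b, HasDerivAt u 0 x := by
    intro x hx
    have := (hd x hx).sub (quad_deriv L c a x hL)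
    rw [hf' x hx, sub_self] at this
    exact this
  refine ⟨c, fun x hx => ?_⟩
  have h1 := constOn_of_derivAt_zero hab hucont hud x hx
  simp only [hu] at h1
  have ha : ((a:ℝ) ^ 2 - a ^ 2) / (2 * L) + c * (a - a) = 0 := by
    simp
  rw [ha] at h1
  linarith [h1]

/-- Uniqueness of the stationary leak profile: a function `F` continuous on `[0,L]`,
twice differentiable on `(0,ℓ₂)` and `(ℓ₂,L)` with `F'' = 1/L` on both pieces,
with vanishing one-sided derivatives `F'(0⁺) = 0`, `F'(L⁻) = 0` and zero mean,
must equal `(x²+ℓ₂²)/(2L) + L/3 − max(x,ℓ₂)` on `[0,L]`. -/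
theorem leak_profile_uniqueness (L : ℝ) (hL : 0 < L)
    (ℓ₂ : ℝ) (hℓ : ℓ₂ ∈ Set.Ioo (0 : ℝ) L)
    (F F' : ℝ → ℝ)
    (hcont : ContinuousOn F (Set.Icc 0 L))
    (hF'left : ∀ x ∈ Set.Ioo (0 : ℝ) ℓ₂, HasDerivAt F (F' x) x)
    (hF''left : ∀ x ∈ Set.Ioo (0 : ℝ) ℓ₂, HasDerivAt F' (1 / L) x)
    (hF'right : ∀ x ∈ Set.Ioo ℓ₂ L, HasDerivAt F (F' x) x)
    (hF''right : ∀ x ∈ Set.Ioo ℓ₂ L, HasDerivAt F' (1 / L) x)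
    (hleft : HasDerivWithinAt F 0 (Set.Ici (0 : ℝ)) 0)
    (hright : HasDerivWithinAt F 0 (Set.Iic L) L)
    (hmean : ∫ x in (0 : ℝ)..L, F x = 0) :
    ∀ x ∈ Set.Icc (0 : ℝ) L,
      F x = (x ^ 2 + ℓ₂ ^ 2) / (2 * L) + L / 3 - max x ℓ₂ := by
  obtain ⟨hℓ0, hℓL⟩ := hℓ
  have hsubL : Set.Icc (0:ℝ) ℓ₂ ⊆ Set.Icc 0 L :=
    Set.Icc_subset_Icc le_rfl hℓL.le
  have hsubR : Set.Icc ℓ₂ L ⊆ Set.Icc 0 L :=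
    Set.Icc_subset_Icc hℓ0.le le_rfl
  obtain ⟨c, hcform⟩ :=
    piece_form L 0 ℓ₂ hL.ne' hℓ0 F F' (hcont.mono hsubL) hF'left hF''left
  obtain ⟨d, hdform⟩ :=
    piece_form L ℓ₂ L hL.ne' hℓL F F' (hcont.mono hsubR) hF'right hF''right
  -- c = 0 from the boundary condition at 0
  have hc0 : c = 0 := by
    set g : ℝ → ℝ :=
      fun x => F 0 + ((x ^ 2 - (0:ℝ) ^ 2) / (2 * L) + c * (x - 0)) with hg
    have hgd : HasDerivAt g ((0:ℝ) / L + c) 0 :=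
      (quad_deriv L c 0 0 hL.ne').const_add (F 0)
    have hmemnhds : Set.Icc (0:ℝ) ℓ₂ ∈ 𝓝[Set.Ici (0:ℝ)] 0 :=
      Icc_mem_nhdsGE hℓ0
    have heq : F =ᶠ[𝓝[Set.Ici (0:ℝ)] 0] g :=
      Filter.eventuallyEq_of_mem hmemnhds fun x hx => hcform x hx
    have hF0 : F 0 = g 0 := by simp [hg]
    have hgd' : HasDerivWithinAt F ((0:ℝ) / L + c) (Set.Ici (0:ℝ)) 0 :=
      (hgd.hasDerivWithinAt).congr_of_eventuallyEq heq hF0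
    have hud : UniqueDiffWithinAt ℝ (Set.Ici (0:ℝ)) 0 :=
      uniqueDiffOn_Ici 0 0 Set.self_mem_Ici
    have h0 := hleft.derivWithin hud
    have h1 := hgd'.derivWithin hud
    rw [h0] at h1
    simpa using h1.symm
  -- d = -1 from the boundary condition at L
  have hd1 : d = -1 := by
    set g : ℝ → ℝ :=
      fun x => F ℓ₂ + ((x ^ 2 - ℓ₂ ^ 2) / (2 * L) + d * (x - ℓ₂)) with hg
    have hgd : HasDerivAt g (L / L + d) L :=
      (quad_deriv L d ℓ₂ L hL.ne').const_add (F ℓ₂)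
    have hmemnhds : Set.Icc ℓ₂ L ∈ 𝓝[Set.Iic L] L :=
      Icc_mem_nhdsLE hℓL
    have heq : F =ᶠ[𝓝[Set.Iic L] L] g :=
      Filter.eventuallyEq_of_mem hmemnhds fun x hx => hdform x hx
    have hFL : F L = g L := hdform L (Set.right_mem_Icc.2 hℓL.le)
    have hgd' : HasDerivWithinAt F (L / L + d) (Set.Iic L) L :=
      (hgd.hasDerivWithinAt).congr_of_eventuallyEq heq hFL
    have hud : UniqueDiffWithinAt ℝ (Set.Iic L) L :=
      uniqueDiffOn_Iic L L Set.self_mem_Iic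
    have h0 := hright.derivWithin hud
    have h1 := hgd'.derivWithin hud
    rw [h0] at h1
    rw [div_self hL.ne'] at h1
    linarith [h1]
  -- explicit forms
  set A : ℝ := F 0 with hA
  have hleftform : ∀ x ∈ Set.Icc (0:ℝ) ℓ₂, F x = A + x ^ 2 / (2 * L) := by
    intro x hx
    have h := hcform x hx
    rw [hc0] at h
    rw [h]
    ring
  have hFℓ₂ : F ℓ₂ = A + ℓ₂ ^ 2 / (2 * L) :=
    hleftform ℓ₂ (Set.right_mem_Icc.2 hℓ0.le)
  have hrightform : ∀ x ∈ Set.Icc ℓ₂ L, F x = A + x ^ 2 / (2 * L) - x + ℓ₂ := by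
    intro x hx
    have h := hdform x hx
    rw [hd1, hFℓ₂] at h
    rw [h]
    field_simp
    ring
  -- compute the mean
  have hint1 : IntervalIntegrable F MeasureTheory.volume 0 ℓ₂ := by
    apply ContinuousOn.intervalIntegrable
    rw [Set.uIcc_of_le hℓ0.le]
    exact hcont.mono hsubL
  have hint2 : IntervalIntegrable F MeasureTheory.volume ℓ₂ L := by
    apply ContinuousOn.intervalIntegrable
    rw [Set.uIcc_of_le hℓL.le]
    exact hcont.mono hsubR
  have hsplit : (∫ x in (0:ℝ)..ℓ₂, F x) + (∫ x in ℓ₂..L, F x) = 0 := by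
    rw [intervalIntegral.integral_add_adjacent_intervals hint1 hint2]
    exact hmean
  have hI1 : (∫ x in (0:ℝ)..ℓ₂, F x) = A * ℓ₂ + ℓ₂ ^ 3 / (6 * L) := by
    have hcg : (∫ x in (0:ℝ)..ℓ₂, F x)
        = ∫ x in (0:ℝ)..ℓ₂, (A + x ^ 2 / (2 * L)) := by
      apply intervalIntegral.integral_congr
      rw [Set.uIcc_of_le hℓ0.le]
      exact hleftform
    rw [hcg]
    have hftc : ∀ x ∈ Set.uIcc (0:ℝ) ℓ₂,
        HasDerivAt (fun x : ℝ => A * x + x ^ 3 / (6 * L)) (A + x ^ 2 / (2 * L)) x := by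
      intro x _
      have h1 : HasDerivAt (fun x : ℝ => A * x) (A * 1) x :=
        (hasDerivAt_id x).const_mul A
      have h2 : HasDerivAt (fun x : ℝ => x ^ 3) (3 * x ^ 2) x := by
        simpa using hasDerivAt_pow 3 x
      have : HasDerivAt (fun x : ℝ => A * x + x ^ 3 / (6 * L))
          (A * 1 + 3 * x ^ 2 / (6 * L)) x := h1.add (h2.div_const (6 * L))
      convert this using 1
      field_simp
      ring
    rw [intervalIntegral.integral_eq_sub_of_hasDerivAt hftc
      (Continuous.intervalIntegrable (by fun_prop) 0 ℓ₂)]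
    ring
  have hI2 : (∫ x in ℓ₂..L, F x) =
      ((A + ℓ₂) * L + L ^ 3 / (6 * L) - L ^ 2 / 2)
        - ((A + ℓ₂) * ℓ₂ + ℓ₂ ^ 3 / (6 * L) - ℓ₂ ^ 2 / 2) := by
    have hcg : (∫ x in ℓ₂..L, F x)
        = ∫ x in ℓ₂..L, (A + ℓ₂ + x ^ 2 / (2 * L) - x) := by
      apply intervalIntegral.integral_congr
      rw [Set.uIcc_of_le hℓL.le]
      intro x hx
      have := hrightform x hx
      rw [this]
      ring
    rw [hcg]
    have hftc : ∀ x ∈ Set.uIcc ℓ₂ L,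
        HasDerivAt (fun x : ℝ => (A + ℓ₂) * x + x ^ 3 / (6 * L) - x ^ 2 / 2)
          (A + ℓ₂ + x ^ 2 / (2 * L) - x) x := by
      intro x _
      have h1 : HasDerivAt (fun x : ℝ => (A + ℓ₂) * x) ((A + ℓ₂) * 1) x :=
        (hasDerivAt_id x).const_mul (A + ℓ₂)
      have h2 : HasDerivAt (fun x : ℝ => x ^ 3) (3 * x ^ 2) x := by
        simpa using hasDerivAt_pow 3 x
      have h3 : HasDerivAt (fun x : ℝ => x ^ 2) (2 * x) x := by
        simpa using hasDerivAt_pow 2 x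
      have : HasDerivAt (fun x : ℝ => (A + ℓ₂) * x + x ^ 3 / (6 * L) - x ^ 2 / 2)
          ((A + ℓ₂) * 1 + 3 * x ^ 2 / (6 * L) - 2 * x / 2) x :=
        (h1.add (h2.div_const (6 * L))).sub (h3.div_const 2)
      convert this using 1
      field_simp
      ring
    rw [intervalIntegral.integral_eq_sub_of_hasDerivAt hftc
      (Continuous.intervalIntegrable (by fun_prop) ℓ₂ L)]
  -- the mean equation determines A
  have hAval : A = ℓ₂ ^ 2 / (2 * L) + L / 3 - ℓ₂ := by
    rw [hI1, hI2] at hsplit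
    field_simp at hsplit
    have h2 : (12 * L * L) * (6 * (A * L))
        = (12 * L * L) * (3 * ℓ₂ ^ 2 + 2 * L ^ 2 - 6 * L * ℓ₂) := by
      linear_combination (6 * L) * hsplit
    have hE : 6 * (A * L) = 3 * ℓ₂ ^ 2 + 2 * L ^ 2 - 6 * L * ℓ₂ :=
      mul_left_cancel₀ (by positivity) h2
    field_simp
    linarith [hE]
  -- conclusion
  intro x hx
  rcases le_total x ℓ₂ with hxℓ | hxℓ
  · have h := hleftform x ⟨hx.1, hxℓ⟩
    rw [max_eq_right hxℓ, h, hAval]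
    field_simp
    ring
  · have h := hrightform x ⟨hxℓ, hx.2⟩
    rw [max_eq_left hxℓ, h, hAval]
    field_simp
    ring
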